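/- For every RCGBAR G (resource contribution game with endowments as bags of atomic resources), the set NE^ca(G) of pure Nash equilibria under public contention-averse preferences is non-empty. -/

import Mathlib

open scoped Classical

/-- A resource contribution game over atomic resource type `Res` with player set `ι`:
each player has a goal (a resource bundle, i.e. a multiset of atomic resources) and
an endowment (a resource bag, i.e. a multiset of resource bundles). -/
structure RCG (Res ι : Type*) where
  goal : ι → Multiset Res
  endow : ι → Multiset (Multiset Res)

namespace RCG

variable {Res ι : Type*} [Fintype ι]

/-- A profile assigns to each player a bag (his contribution). -/
abbrev Profile (Res ι : Type*) := ι → Multiset (Multiset Res)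

/-- Outcome of a profile: the multiset sum of all contributions. -/
def out (P : Profile Res ι) : Multiset (Multiset Res) := ∑ i, P i

/-- The bag `X` can be transformed into the bundle `B`: `♭(B) ⊆ ♭•(X)`. -/
def Trans (X : Multiset (Multiset Res)) (B : Multiset Res) : Prop := B ≤ X.sum

/-- Player `i` is potentially satisfied by profile `P`. -/
def Psat (G : RCG Res ι) (P : Profile Res ι) (i : ι) : Prop :=
  Trans (out P) (G.goal i)

/-- The set of players potentially satisfied by `P`. -/
noncomputable def psatPlayers (G : RCG Res ι) (P : Profile Res ι) : Finset ι :=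
  Finset.univ.filter fun i => Psat G P i

/-- The profile `P` is contentious. -/
def Contentious (G : RCG Res ι) (P : Profile Res ι) : Prop :=
  ¬ Trans (out P) (∑ j ∈ psatPlayers G P, G.goal j)

/-- Restriction of bundle `B` to the resource types occurring in `C`. -/
noncomputable def restr (B C : Multiset Res) : Multiset Res := B.filter (· ∈ C)

/-- The profile `P` is contentious for player `i`. -/
def ContentiousFor (G : RCG Res ι) (P : Profile Res ι) (i : ι) : Prop :=
  Psat G P i ∧ ¬ Trans (out P) (∑ j ∈ psatPlayers G P, restr (G.goal j) (G.goal i))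

/-- The three kinds of preferences: contention-tolerant, (public) contention-averse,
private contention-averse. -/
inductive Pref | ct | ca | pca

/-- `P` is a good profile for player `i` according to preference kind `pref`. -/
def Good (pref : Pref) (G : RCG Res ι) (P : Profile Res ι) (i : ι) : Prop :=
  match pref with
  | .ct => Psat G P i
  | .ca => Psat G P i ∧ ¬ Contentious G P
  | .pca => Psat G P i ∧ ¬ ContentiousFor G P i

/-- Player `i` strictly prefers `P` over `Q` (i.e. `Q ≺^pref_i P`). -/
def Prefers (pref : Pref) (G : RCG Res ι) (i : ι) (Q P : Profile Res ι) : Prop :=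
  (¬ Good pref G P i ∧ ¬ Good pref G Q i ∧ P i < Q i) ∨
  (Good pref G P i ∧ ¬ Good pref G Q i) ∨
  (Good pref G P i ∧ Good pref G Q i ∧ P i < Q i)

/-- `C` is a profitable deviation for player `i` from profile `P`. -/
noncomputable def ProfDev (pref : Pref) (G : RCG Res ι) (P : Profile Res ι) (i : ι)
    (C : Multiset (Multiset Res)) : Prop :=
  C ≤ G.endow i ∧ Prefers pref G i P (Function.update P i C)

/-- `P` is a pure Nash equilibrium of `G` according to `pref`:
`P` is a profile of `G` and no player has a profitable deviation. -/
noncomputable def NE (pref : Pref) (G : RCG Res ι) (P : Profile Res ι) : Prop :=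
  (∀ i, P i ≤ G.endow i) ∧ ∀ i C, ¬ ProfDev pref G P i C

/-- `G` is an RCG with endowments as bags of atomic resources. -/
def IsRCGBAR (G : RCG Res ι) : Prop :=
  ∀ i, ∀ B ∈ G.endow i, ∃ r : Res, B = {r}

/-- `G` has independent objectives. -/
def IndepObjectives (G : RCG Res ι) : Prop :=
  ∀ i j : ι, i ≠ j → ∀ r : Res, r ∈ G.goal i → r ∉ G.goal j

end RCG

namespace RCGaux

open Finset

lemma msum_le_msum {α : Type*} {s t : Multiset (Multiset α)} (h : s ≤ t) :
    s.sum ≤ t.sum := by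
  obtain ⟨u, rfl⟩ := Multiset.le_iff_exists_add.mp h
  rw [Multiset.sum_add]
  exact self_le_add_right _ _

lemma atoms_eq {α : Type*} (X : Multiset (Multiset α)) (h : ∀ B ∈ X, ∃ r : α, B = {r}) :
    X = X.sum.map (fun r => ({r} : Multiset α)) := by
  induction X using Multiset.induction_on with
  | empty => simp
  | cons B X ih =>
    obtain ⟨r, rfl⟩ := h _ (Multiset.mem_cons_self _ _)
    rw [Multiset.sum_cons,
      show ({r} : Multiset α) + X.sum = r ::ₘ X.sum from Multiset.singleton_add _ _,
      Multiset.map_cons, ← ih fun B hB => h _ (Multiset.mem_cons_of_mem hB)]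

lemma card_sum_atoms {α : Type*} (X : Multiset (Multiset α))
    (h : ∀ B ∈ X, ∃ r : α, B = {r}) : Multiset.card X.sum = Multiset.card X := by
  conv_rhs => rw [atoms_eq X h]
  rw [Multiset.card_map]

lemma sum_map_singleton' {α : Type*} (s : Multiset α) :
    (s.map fun r => ({r} : Multiset α)).sum = s := by
  induction s using Multiset.induction_on with
  | empty => simp
  | cons a s ih => simp [ih]

lemma sum_flatten {κ α : Type*} (s : Finset κ) (f : κ → Multiset (Multiset α)) :
    (∑ k ∈ s, f k).sum = ∑ k ∈ s, (f k).sum := by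
  classical
  induction s using Finset.cons_induction with
  | empty => simp
  | cons a s ha ih => rw [Finset.sum_cons, Finset.sum_cons, Multiset.sum_add, ih]

variable {Res ι : Type*} [Fintype ι]

/-- A coalition is closed if it contains every player with a nonzero goal
realizable within the coalition's total goal. -/
def closed (g : ι → Multiset Res) (T : Finset ι) : Prop :=
  ∀ m, g m ≤ ∑ k ∈ T, g k → m ∈ T ∨ g m = 0

/-- The closure of a coalition: the intersection of all closed supersets. -/
noncomputable def cl (g : ι → Multiset Res) (X : Finset ι) : Finset ι :=
  Finset.univ.filter fun m => ∀ T : Finset ι, closed g T → X ⊆ T → m ∈ T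

lemma subset_cl (g : ι → Multiset Res) (X : Finset ι) : X ⊆ cl g X := by
  intro m hm
  exact Finset.mem_filter.mpr ⟨Finset.mem_univ _, fun T _ hXT => hXT hm⟩

lemma cl_subset {g : ι → Multiset Res} {X T : Finset ι} (hT : closed g T) (hXT : X ⊆ T) :
    cl g X ⊆ T := by
  intro m hm
  exact (Finset.mem_filter.mp hm).2 T hT hXT

lemma cl_closed (g : ι → Multiset Res) (X : Finset ι) : closed g (cl g X) := by
  intro m hm
  by_cases hg : g m = 0
  · exact Or.inr hg
  · refine Or.inl (Finset.mem_filter.mpr ⟨Finset.mem_univ _, fun T hT hXT => ?_⟩)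
    have h1 : ∑ k ∈ cl g X, g k ≤ ∑ k ∈ T, g k :=
      Finset.sum_le_sum_of_subset (cl_subset hT hXT)
    rcases hT m (hm.trans h1) with h | h
    · exact h
    · exact absurd h hg

/-- The invariant maintained by the invasion process. -/
def Inv (g e : ι → Multiset Res) (S : Finset ι) (c : ι → Multiset Res) : Prop :=
  closed g S ∧ (∀ k, c k ≤ e k) ∧ (∀ k, k ∉ S → c k = 0) ∧
    (∑ k, c k) = (∑ m ∈ S, g m) ∧
    ∀ i, c i ≠ 0 → ∃ V : Finset ι, V ⊆ S ∧ i ∈ V ∧ c i = ∑ m ∈ V, g m ∧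
      ∀ T : Finset ι, closed g T → S \ V ⊆ T → i ∈ T → S ⊆ T

end RCGaux

/-- every RCGBAR admits a pure Nash equilibrium under public
contention-averse preferences. -/
theorem RCGBAR_NE_ca_nonempty {Res ι : Type*} [Fintype ι]
    (G : RCG Res ι) (hbar : RCG.IsRCGBAR G) :
    ∃ P : RCG.Profile Res ι, RCG.NE .ca G P := by
  classical
  set g : ι → Multiset Res := G.goal with hgdef
  set e : ι → Multiset Res := fun i => (G.endow i).sum with hedef
  -- base invariant pair
  have hbase : RCGaux.Inv g e ∅ (fun _ => 0) := by
    refine ⟨?_, fun k => zero_le, fun k _ => rfl, by simp, fun i hi => absurd rfl hi⟩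
    intro m hm
    right
    simpa using hm
  -- a maximal invariant pair
  obtain ⟨S, c, hInv, hmax⟩ :
      ∃ S c, RCGaux.Inv g e S c ∧ ∀ S' c', RCGaux.Inv g e S' c' → S'.card ≤ S.card := by
    set A : Finset ℕ := (Finset.range (Fintype.card ι + 1)).filter
      (fun n => ∃ S c, RCGaux.Inv g e S c ∧ S.card = n) with hA
    have h0A : 0 ∈ A := by
      refine Finset.mem_filter.mpr ⟨Finset.mem_range.mpr (Nat.succ_pos _), ∅, fun _ => 0,
        hbase, rfl⟩
    have hmem := A.max'_mem ⟨0, h0A⟩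
    obtain ⟨S, c, hInv, hScard⟩ := (Finset.mem_filter.mp hmem).2
    refine ⟨S, c, hInv, fun S' c' h' => ?_⟩
    rw [hScard]
    refine Finset.le_max' A _ (Finset.mem_filter.mpr ⟨Finset.mem_range.mpr ?_, S', c', h', rfl⟩)
    exact Nat.lt_succ_of_le ((Finset.card_le_univ S').trans_eq Finset.card_univ)
  obtain ⟨hSclosed, hce, hc0, hsum, hlead⟩ := hInv
  set O : Multiset Res := ∑ k, c k with hOdef
  have hOS : O = ∑ m ∈ S, g m := hsum
  set P : RCG.Profile Res ι := fun i => (c i).map (fun r => ({r} : Multiset Res)) with hPdef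
  have hPsub : ∀ i, P i ≤ G.endow i := by
    intro i
    have h1 : P i ≤ (e i).map (fun r => ({r} : Multiset Res)) :=
      Multiset.map_le_map (hce i)
    rwa [← RCGaux.atoms_eq (G.endow i) (hbar i)] at h1
  have hPsum : ∀ i, (P i).sum = c i := fun i => RCGaux.sum_map_singleton' _
  have houtP : (RCG.out P).sum = O := by
    rw [RCG.out, RCGaux.sum_flatten]
    exact Finset.sum_congr rfl fun k _ => hPsum k
  have hPsatP : ∀ m, RCG.Psat G P m ↔ g m ≤ O := by
    intro m
    rw [RCG.Psat, RCG.Trans, houtP]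
  have hNC : ¬ RCG.Contentious G P := by
    intro hcont
    apply hcont
    show (∑ j ∈ RCG.psatPlayers G P, g j) ≤ (RCG.out P).sum
    rw [houtP, hOS]
    refine Finset.sum_le_sum_of_ne_zero ?_
    intro m hm hgm
    have : RCG.Psat G P m := (Finset.mem_filter.mp hm).2
    rcases hSclosed m (hOS ▸ (hPsatP m).mp this) with h | h
    · exact h
    · exact absurd h hgm
  have hGoodP : ∀ m, RCG.Good .ca G P m ↔ g m ≤ O := by
    intro m
    constructor
    · intro h
      exact (hPsatP m).mp h.1
    · intro h
      exact ⟨(hPsatP m).mpr h, hNC⟩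
  refine ⟨P, hPsub, ?_⟩
  rintro i C ⟨hCle, hpref⟩
  set σ : Multiset Res := ∑ k ∈ Finset.univ \ {i}, c k with hσdef
  have hσsum : σ + c i = O := by
    rw [hσdef, hOdef]
    rw [← Finset.sum_sdiff (Finset.subset_univ {i})]
    simp
  have houtQ : (RCG.out (Function.update P i C)).sum = C.sum + σ := by
    rw [RCG.out, Finset.sum_update_of_mem (Finset.mem_univ i), Multiset.sum_add,
      RCGaux.sum_flatten]
    congr 1
    exact Finset.sum_congr rfl fun k _ => hPsum k
  -- common facts about the psat players of the deviation profile, given it is good for i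
  have hTfacts : ∀ (hnew : RCG.Good .ca G (Function.update P i C) i),
      g i ≤ C.sum + σ ∧
      (∑ j ∈ RCG.psatPlayers G (Function.update P i C), g j) ≤ C.sum + σ ∧
      RCGaux.closed g (RCG.psatPlayers G (Function.update P i C)) ∧
      (∀ m, g m ≤ C.sum + σ → m ∈ RCG.psatPlayers G (Function.update P i C)) := by
    intro hnew
    obtain ⟨hpsatQ, hncQ⟩ := hnew
    have hmemT : ∀ m, g m ≤ C.sum + σ → m ∈ RCG.psatPlayers G (Function.update P i C) := by
      intro m hm
      refine Finset.mem_filter.mpr ⟨Finset.mem_univ m, ?_⟩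
      show g m ≤ (RCG.out (Function.update P i C)).sum
      rwa [houtQ]
    have hTsum : (∑ j ∈ RCG.psatPlayers G (Function.update P i C), g j) ≤ C.sum + σ := by
      have := not_not.mp hncQ
      rw [RCG.Trans, houtQ] at this
      exact this
    refine ⟨?_, hTsum, ?_, hmemT⟩
    · have := hpsatQ
      rw [RCG.Psat, RCG.Trans, houtQ] at this
      exact this
    · intro m hm
      exact Or.inl (hmemT m (hm.trans hTsum))
  rcases hpref with ⟨hnew, hold, hlt⟩ | ⟨hnew, hold⟩ | ⟨hnew, hold, hlt⟩
  -- Case 1: not good before nor after, strictly smaller contribution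
  · have hgiO : ¬ g i ≤ O := fun h => hold ((hGoodP i).mpr h)
    have hiS : i ∉ S := fun hi =>
      hgiO (hOS ▸ Finset.single_le_sum (fun m _ => (zero_le : 0 ≤ g m)) hi)
    have hci : c i = 0 := hc0 i hiS
    rw [Function.update_self] at hlt
    have : P i = 0 := by
      rw [hPdef]
      simp [hci]
    rw [this] at hlt
    have hC0 : C = 0 := le_antisymm (le_of_lt hlt) (zero_le : 0 ≤ C)
    rw [hC0] at hlt
    exact lt_irrefl _ hlt
  -- Case 2: deviation makes i good, but i was not good: grow the invariant pair
  · obtain ⟨hgi, hTsum, hTclosed, hmemT⟩ := hTfacts hnew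
    set T := RCG.psatPlayers G (Function.update P i C) with hTdef
    have hgiO : ¬ g i ≤ O := fun h => hold ((hGoodP i).mpr h)
    have hiS : i ∉ S := fun hi =>
      hgiO (hOS ▸ Finset.single_le_sum (fun m _ => (zero_le : 0 ≤ g m)) hi)
    have hci : c i = 0 := hc0 i hiS
    have hσO : σ = O := by rw [← hσsum, hci, add_zero]
    have hOO' : O ≤ C.sum + σ := by rw [hσO]; exact le_add_self
    have hST : S ⊆ T := by
      intro m hm
      exact hmemT m ((hOS ▸ Finset.single_le_sum (fun m _ => (zero_le : 0 ≤ g m)) hm).trans hOO')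
    have hiT : i ∈ T := hmemT i hgi
    set S' : Finset ι := RCGaux.cl g (insert i S) with hS'def
    have hiS' : i ∈ S' := RCGaux.subset_cl g _ (Finset.mem_insert_self i S)
    have hSS' : S ⊆ S' := (Finset.subset_insert i S).trans (RCGaux.subset_cl g _)
    have hS'T : S' ⊆ T := RCGaux.cl_subset hTclosed (Finset.insert_subset_iff.mpr ⟨hiT, hST⟩)
    have hTSle : ∑ m ∈ T \ S, g m ≤ C.sum := by
      have h1 : ∑ m ∈ T \ S, g m + ∑ m ∈ S, g m = ∑ m ∈ T, g m := Finset.sum_sdiff hST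
      have h2 : ∑ m ∈ T \ S, g m + ∑ m ∈ S, g m ≤ C.sum + ∑ m ∈ S, g m := by
        rw [h1]
        refine hTsum.trans ?_
        rw [hσO, hOS]
      exact le_of_add_le_add_right h2
    have hVle : ∑ m ∈ S' \ S, g m ≤ e i := by
      refine le_trans (le_trans (Finset.sum_le_sum_of_subset ?_) hTSle)
        (RCGaux.msum_le_msum hCle)
      exact Finset.sdiff_subset_sdiff hS'T (Finset.Subset.refl S)
    set c' : ι → Multiset Res := Function.update c i (∑ m ∈ S' \ S, g m) with hc'def
    have hInv' : RCGaux.Inv g e S' c' := by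
      refine ⟨RCGaux.cl_closed g _, ?_, ?_, ?_, ?_⟩
      · intro k
        by_cases hk : k = i
        · subst hk; rw [hc'def, Function.update_self]; exact hVle
        · rw [hc'def, Function.update_of_ne hk]; exact hce k
      · intro k hk
        have hki : k ≠ i := fun h => hk (h ▸ hiS')
        rw [hc'def, Function.update_of_ne hki]
        exact hc0 k (fun hkS => hk (hSS' hkS))
      · rw [hc'def, Finset.sum_update_of_mem (Finset.mem_univ i)]
        rw [show (∑ m ∈ Finset.univ \ {i}, c m) = σ from rfl, hσO, hOS,
          ← Finset.sum_sdiff hSS']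
      · intro i' hi'
        by_cases hii : i' = i
        · subst hii
          refine ⟨S' \ S, Finset.sdiff_subset, Finset.mem_sdiff.mpr ⟨hiS', hiS⟩,
            by rw [hc'def, Function.update_self], ?_⟩
          intro T₂ hT₂ hsub hiT₂
          have hS'V : S' \ (S' \ S) = S := by
            rw [sdiff_sdiff_right_self]
            exact Finset.inter_eq_right.mpr hSS'
          rw [hS'V] at hsub
          exact RCGaux.cl_subset hT₂ (Finset.insert_subset_iff.mpr ⟨hiT₂, hsub⟩)
        · have hc'i' : c' i' = c i' := by rw [hc'def, Function.update_of_ne hii]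
          obtain ⟨V', h1, h2, h3, h4⟩ := hlead i' (hc'i' ▸ hi')
          refine ⟨V', h1.trans hSS', h2, hc'i'.trans h3, ?_⟩
          intro T₂ hT₂ hsub hiT₂
          have hSsub : S ⊆ T₂ := by
            refine h4 T₂ hT₂ ?_ hiT₂
            intro m hm
            refine hsub ?_
            rw [Finset.mem_sdiff] at hm ⊢
            exact ⟨hSS' hm.1, hm.2⟩
          intro m hm
          by_cases hmV : m ∈ V'
          · exact hSsub (h1 hmV)
          · exact hsub (Finset.mem_sdiff.mpr ⟨hm, hmV⟩)
    have hcard := hmax S' c' hInv'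
    have hlt' : S.card < S'.card := by
      refine Finset.card_lt_card ?_
      exact (Finset.ssubset_iff_of_subset hSS').mpr ⟨i, hiS', hiS⟩
    omega
  -- Case 3: good before and after, strictly smaller contribution: cardinality contradiction
  · obtain ⟨hgi, hTsum, hTclosed, hmemT⟩ := hTfacts hnew
    set T := RCG.psatPlayers G (Function.update P i C) with hTdef
    rw [Function.update_self] at hlt
    have hci : c i ≠ 0 := by
      intro h
      rw [hPdef] at hlt
      simp only [h, Multiset.map_zero] at hlt
      exact absurd (le_antisymm (le_of_lt hlt) (zero_le : 0 ≤ C)) (fun hc => by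
        rw [hc] at hlt; exact lt_irrefl _ hlt)
    obtain ⟨V, hVS, hiV, hciV, hprop⟩ := hlead i hci
    have hσV : σ = ∑ m ∈ S \ V, g m := by
      have h1 : (∑ m ∈ S \ V, g m) + (∑ m ∈ V, g m) = ∑ m ∈ S, g m :=
        Finset.sum_sdiff hVS
      have h2 : σ + c i = (∑ m ∈ S \ V, g m) + c i := by
        rw [hσsum, hOS, ← h1, hciV]
      exact add_right_cancel h2
    have hSVT : S \ V ⊆ T := by
      intro m hm
      refine hmemT m ?_
      have h1 : g m ≤ ∑ m ∈ S \ V, g m :=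
        Finset.single_le_sum (fun m _ => (zero_le : 0 ≤ g m)) hm
      rw [← hσV] at h1
      exact h1.trans (le_add_self)
    have hiT : i ∈ T := hmemT i hgi
    have hST : S ⊆ T := hprop T hTclosed hSVT hiT
    have hOled : (∑ m ∈ S, g m) ≤ C.sum + σ :=
      le_trans (Finset.sum_le_sum_of_subset hST) hTsum
    -- cardinality contradiction
    have hCsing : ∀ B ∈ C, ∃ r : Res, B = {r} := by
      intro B hB
      have : B ∈ P i := Multiset.mem_of_le (le_of_lt hlt) hB
      rw [hPdef] at this
      obtain ⟨r, _, hr⟩ := Multiset.mem_map.mp this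
      exact ⟨r, hr.symm⟩
    have hcardC : Multiset.card C.sum = Multiset.card C := RCGaux.card_sum_atoms C hCsing
    have hcardlt : Multiset.card C < Multiset.card (c i) := by
      have := Multiset.card_lt_card hlt
      rwa [hPdef, Multiset.card_map] at this
    have hcard1 : Multiset.card (∑ m ∈ S, g m) = Multiset.card σ + Multiset.card (c i) := by
      rw [← hOS, ← hσsum, Multiset.card_add]
    have hcard2 : Multiset.card (∑ m ∈ S, g m) ≤ Multiset.card C.sum + Multiset.card σ := by
      have := Multiset.card_le_card hOled
      rwa [Multiset.card_add] at this
    rw [hcardC] at hcard2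
    omega
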